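/- In ℚ[[q]], the coefficient of q^n in ∏_{j≥1} exp(t q^j) (as a polynomial in t) is ∑_{partitions of n} t^r / ∏_j k_j!, where the sum is over multiplicity sequences (k_j) with ∑ j·k_j = n and r = ∑ k_j. Equating this with the expansion of exp(tq/(1−q)) yields ∑_{∑k_i = r, ∑ i·k_i = n} r!/∏ k_i! = C(n−1, r−1). -/

import Mathlib

section FineP2

open Finset PowerSeries


lemma finsum_subtype_eq_sum {α M : Type*} [AddCommMonoid M] (f : α → M) (p : α → Prop)
    (T : Finset α) (h : ∀ a, p a ↔ a ∈ T) :
    ∑ᶠ k : {k : α // p k}, f ↑k = ∑ k ∈ T, f k := by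
  have hs : {i | p i} = ↑T := by ext a; simp [h]
  rw [← finsum_mem_coe_finset, ← hs, ← finsum_set_coe_eq_finsum_mem]
  rfl

lemma multinomial_subset {α : Type*} {s t : Finset α} (f : α → ℕ) (h : s ⊆ t)
    (h2 : ∀ i ∈ t, i ∉ s → f i = 0) : Nat.multinomial t f = Nat.multinomial s f := by
  unfold Nat.multinomial
  rw [Finset.sum_subset h h2, Finset.prod_subset h (fun x hx hxs => by simp [h2 x hx hxs])]

lemma supp_sub {n : ℕ} (k : ℕ →₀ ℕ) (h0 : k 0 = 0) (hw : (k.sum fun i v => i * v) = n) :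
    k.support ⊆ Finset.Icc 1 n := by
  intro i hi
  have hi0 : i ≠ 0 := fun h => (Finsupp.mem_support_iff.1 hi) (h ▸ h0)
  have h1 : 1 ≤ k i := Nat.one_le_iff_ne_zero.2 (Finsupp.mem_support_iff.1 hi)
  have : i * k i ≤ n := hw ▸ Finset.single_le_sum (f := fun j => j * k j)
    (fun j _ => Nat.zero_le _) hi
  exact Finset.mem_Icc.2 ⟨Nat.one_le_iff_ne_zero.2 hi0,
    le_trans (Nat.le_mul_of_pos_right i h1) this⟩

-- the all-ones power series and the geometric series comparison
lemma coeff_geom_pow (n r : ℕ) (hn : 1 ≤ n) (hr : 1 ≤ r) (hrn : r ≤ n) :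
    PowerSeries.coeff (R := ℚ) n ((∑ i ∈ Finset.Icc 1 n, (X : ℚ⟦X⟧) ^ i) ^ r) =
      ((n - 1).choose (r - 1) : ℚ) := by
  set u : ℚ⟦X⟧ := (invOneSubPow ℚ 1).val with hu
  have hcu : ∀ d, coeff (R := ℚ) d u = 1 := by
    intro d
    rw [hu, invOneSubPow_val_succ_eq_mk_add_choose, coeff_mk]
    simp
  set g : ℚ⟦X⟧ := ∑ i ∈ Finset.range n, X ^ i with hg
  have hsum : (∑ i ∈ Finset.Icc 1 n, (X : ℚ⟦X⟧) ^ i) = X * g := by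
    have : Finset.Icc 1 n = Finset.Ico 1 (n + 1) := by rfl
    rw [this, Finset.sum_Ico_eq_sum_range, mul_sum]
    simp [pow_add, pow_succ, mul_comm]
  have hug : u = g + X ^ n * u := by
    ext d
    rw [map_add, hcu, hg, map_sum]
    simp only [coeff_X_pow]
    rw [Finset.sum_ite_eq (Finset.range n) d (fun _ => (1 : ℚ))]
    rw [mul_comm ((X : ℚ⟦X⟧) ^ n) u, coeff_mul_X_pow', hcu]
    by_cases hd : d < n
    · simp [hd, Finset.mem_range, not_le.2 hd]
    · simp [hd, Finset.mem_range, not_lt.1 hd]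
  have hdiff : PowerSeries.coeff (R := ℚ) (n - r) (g ^ r) = PowerSeries.coeff (R := ℚ) (n - r) (u ^ r) := by
    obtain ⟨w, hw⟩ := sub_dvd_pow_sub_pow u g r
    have husub : u - g = X ^ n * u := by nth_rewrite 1 [hug]; ring
    have : coeff (R := ℚ) (n - r) (u ^ r - g ^ r) = 0 := by
      rw [hw, husub, mul_assoc]
      have : (X : ℚ⟦X⟧) ^ n ∣ X ^ n * (u * w) := dvd_mul_right _ _
      exact (X_pow_dvd_iff.1 this) (n - r) (Nat.sub_lt (lt_of_lt_of_le hn le_rfl) hr)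
    have h2 : coeff (R := ℚ) (n - r) (u ^ r) - coeff (R := ℚ) (n - r) (g ^ r) = 0 := by
      rw [← map_sub]; exact this
    linarith
  have hup : u ^ r = ((invOneSubPow ℚ r).val : ℚ⟦X⟧) := by
    rw [hu, invOneSubPow_eq_inv_one_sub_pow, invOneSubPow_eq_inv_one_sub_pow, pow_one,
      ← Units.val_pow_eq_pow_val]
  rw [hsum, mul_pow, ← Nat.sub_add_cancel hrn, coeff_X_pow_mul, hdiff, hup,
    invOneSubPow_val_eq_mk_sub_one_add_choose_of_pos ℚ r hr, coeff_mk]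
  congr 2
  omega

private lemma fine_part2 (n r : ℕ) (hn : 1 ≤ n) (hr : 1 ≤ r) :
    ∑ᶠ k : {k : ℕ →₀ ℕ //
        k 0 = 0 ∧ (k.sum fun _ v => v) = r ∧ (k.sum fun i v => i * v) = n},
      Nat.multinomial (k : ℕ →₀ ℕ).support (k : ℕ →₀ ℕ) = (n - 1).choose (r - 1) := by
  classical
  set p : (ℕ →₀ ℕ) → Prop := fun k =>
    k 0 = 0 ∧ (k.sum fun _ v => v) = r ∧ (k.sum fun i v => i * v) = n with hp
  -- every k satisfying p has r ≤ n
  have hrle : ∀ k : ℕ →₀ ℕ, p k → r ≤ n := by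
    intro k ⟨h0, h1, h2⟩
    calc r = k.sum fun _ v => v := h1.symm
    _ ≤ k.sum fun i v => i * v := by
        apply Finset.sum_le_sum
        intro i hi
        have : i ≠ 0 := fun h => (Finsupp.mem_support_iff.1 hi) (h ▸ h0)
        exact Nat.le_mul_of_pos_left _ (Nat.pos_of_ne_zero this)
    _ = n := h2
  by_cases hrn : r ≤ n
  swap
  · have he : IsEmpty {k : ℕ →₀ ℕ // p k} := by
      constructor; rintro ⟨k, hk⟩; exact hrn (hrle k hk)
    rw [@finsum_of_isEmpty _ _ _ he, Nat.choose_eq_zero_of_lt (by omega)]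
  -- the finite set
  set M : ℕ →₀ ℕ := Finsupp.indicator (Finset.Icc 1 n) (fun _ _ => r) with hM
  set T : Finset (ℕ →₀ ℕ) := (Finset.Icc 0 M).filter p with hT
  have hmem : ∀ k, p k ↔ k ∈ T := by
    intro k
    constructor
    · rintro hk
      obtain ⟨h0, h1, h2⟩ := id hk
      refine Finset.mem_filter.2 ⟨Finset.mem_Icc.2 ⟨zero_le, ?_⟩, hk⟩
      rw [Finsupp.le_iff]
      intro i hi
      have his : i ∈ Finset.Icc 1 n := supp_sub k h0 h2 hi
      rw [hM, Finsupp.indicator_of_mem his]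
      exact h1 ▸ Finset.single_le_sum (f := fun j => k j) (fun j _ => Nat.zero_le _) hi
    · exact fun h => (Finset.mem_filter.1 h).2
  rw [finsum_subtype_eq_sum (α := ℕ →₀ ℕ)
    (fun k => Nat.multinomial k.support ⇑k) p T hmem]
  -- now cast to ℚ and compare coefficients
  have key : ((∑ k ∈ T, Nat.multinomial k.support (k : ℕ →₀ ℕ) : ℕ) : ℚ) =
      PowerSeries.coeff (R := ℚ) n ((∑ i ∈ Finset.Icc 1 n, (X : ℚ⟦X⟧) ^ i) ^ r) := by
    rw [Finset.sum_pow_eq_sum_piAntidiag, map_sum]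
    have hterm : ∀ f ∈ Finset.piAntidiag (Finset.Icc 1 n) r,
        PowerSeries.coeff (R := ℚ) n ((Nat.multinomial (Finset.Icc 1 n) f : ℚ⟦X⟧) *
          ∏ i ∈ Finset.Icc 1 n, ((X : ℚ⟦X⟧) ^ i) ^ f i) =
        (Nat.multinomial (Finset.Icc 1 n) f : ℚ) *
          (if n = ∑ i ∈ Finset.Icc 1 n, i * f i then 1 else 0) := by
      intro f _
      rw [← map_natCast (PowerSeries.C (R := ℚ)), PowerSeries.coeff_C_mul]
      congr 1
      simp_rw [← pow_mul]
      rw [Finset.prod_pow_eq_pow_sum, PowerSeries.coeff_X_pow]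
    rw [Finset.sum_congr rfl hterm]
    simp_rw [mul_ite, mul_one, mul_zero]
    rw [← Finset.sum_filter]
    rw [Nat.cast_sum]
    refine (Finset.sum_nbij' (fun k => (k : ℕ → ℕ))
      (fun f => Finsupp.indicator (Finset.Icc 1 n) (fun i _ => f i)) ?_ ?_ ?_ ?_ ?_)
    · -- k ∈ T → ⇑k ∈ filter
      intro k hk
      obtain ⟨h0, h1, h2⟩ := (hmem k).2 hk
      have hsupp := supp_sub k h0 h2
      refine Finset.mem_filter.2 ⟨Finset.mem_piAntidiag.2 ⟨?_, ?_⟩, ?_⟩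
      · rw [← Finsupp.sum_of_support_subset k hsupp (fun _ v => v) (fun _ _ => rfl)]
        exact h1
      · intro i hi; exact hsupp (Finsupp.mem_support_iff.2 hi)
      · rw [eq_comm,
          ← Finsupp.sum_of_support_subset k hsupp (fun i v => i * v) (fun i _ => mul_zero i)]
        exact h2.symm ▸ rfl
    · -- f ∈ filter → onFinset f ∈ T
      intro f hf
      obtain ⟨hf1, hf2⟩ := Finset.mem_filter.1 hf
      obtain ⟨hsum, hsupp⟩ := Finset.mem_piAntidiag.1 hf1
      set k : ℕ →₀ ℕ := Finsupp.indicator (Finset.Icc 1 n) (fun i _ => f i) with hk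
      have hkf : ∀ a, k a = f a := by
        intro a
        by_cases ha : a ∈ Finset.Icc 1 n
        · rw [hk, Finsupp.indicator_of_mem ha]
        · rw [hk, Finsupp.indicator_of_notMem ha]
          by_contra h
          exact ha (hsupp a (fun hh => h hh.symm))
      have hks : k.support ⊆ Finset.Icc 1 n := fun a ha => by
        by_contra h
        exact (Finsupp.mem_support_iff.1 ha) (by rw [hkf]; by_contra h2; exact h (hsupp a h2))
      have hpk : p k := by
        refine ⟨?_, ?_, ?_⟩
        · rw [hkf]
          by_contra h
          have : (0 : ℕ) ∉ Finset.Icc 1 n := by simp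
          exact this (hsupp 0 h)
        · rw [Finsupp.sum_of_support_subset k hks (fun _ v => v) (fun _ _ => rfl)]
          simp only [hkf]
          exact hsum
        · rw [Finsupp.sum_of_support_subset k hks (fun i v => i * v) (fun i _ => mul_zero i)]
          simp only [hkf]
          exact hf2.symm
      exact (hmem k).1 hpk
    · -- left inverse
      intro k hk
      obtain ⟨h0, h1, h2⟩ := (hmem k).2 hk
      have hsupp := supp_sub k h0 h2
      ext a
      by_cases ha : a ∈ Finset.Icc 1 n
      · rw [Finsupp.indicator_of_mem ha]
      · rw [Finsupp.indicator_of_notMem ha]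
        by_contra h
        exact ha (hsupp (Finsupp.mem_support_iff.2 (fun hh => h hh.symm)))
    · -- right inverse
      intro f hf
      obtain ⟨hf1, hf2⟩ := Finset.mem_filter.1 hf
      obtain ⟨hsum, hsupp⟩ := Finset.mem_piAntidiag.1 hf1
      funext a
      show (Finsupp.indicator (Finset.Icc 1 n) (fun i _ => f i)) a = f a
      by_cases ha : a ∈ Finset.Icc 1 n
      · rw [Finsupp.indicator_of_mem ha]
      · rw [Finsupp.indicator_of_notMem ha]
        by_contra h
        exact ha (hsupp a (fun hh => h hh.symm))
    · -- terms
      intro k hk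
      obtain ⟨h0, h1, h2⟩ := (hmem k).2 hk
      have hsupp := supp_sub k h0 h2
      rw [multinomial_subset (k : ℕ → ℕ) hsupp
        (fun i _ hi => Finsupp.notMem_support_iff.1 hi)]
  have := key.trans (coeff_geom_pow n r hn hr hrn)
  exact_mod_cast this


end FineP2

section FineP1

open Finset Polynomial


lemma finsum_subtype_eq_sum' {α M : Type*} [AddCommMonoid M] (f : α → M) (p : α → Prop)
    (T : Finset α) (h : ∀ a, p a ↔ a ∈ T) :
    ∑ᶠ k : {k : α // p k}, f ↑k = ∑ k ∈ T, f k := by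
  have hs : {i | p i} = ↑T := by ext a; simp [h]
  rw [← finsum_mem_coe_finset, ← hs, ← finsum_set_coe_eq_finsum_mem]
  rfl

lemma supp_sub' {n : ℕ} (k : ℕ →₀ ℕ) (h0 : k 0 = 0) (hw : (k.sum fun i v => i * v) = n) :
    k.support ⊆ Finset.Icc 1 n := by
  intro i hi
  have hi0 : i ≠ 0 := fun h => (Finsupp.mem_support_iff.1 hi) (h ▸ h0)
  have h1 : 1 ≤ k i := Nat.one_le_iff_ne_zero.2 (Finsupp.mem_support_iff.1 hi)
  have : i * k i ≤ n := hw ▸ Finset.single_le_sum (f := fun j => j * k j)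
    (fun j _ => Nat.zero_le _) hi
  exact Finset.mem_Icc.2 ⟨Nat.one_le_iff_ne_zero.2 hi0,
    le_trans (Nat.le_mul_of_pos_right i h1) this⟩

private lemma fine_part1 (n N : ℕ) (hN : n ≤ N) (hn : 1 ≤ n) :
    (PowerSeries.coeff (R := Polynomial ℚ) n (∏ j ∈ Finset.Icc 1 N,
        PowerSeries.mk fun d =>
          if j ∣ d then C (((d / j).factorial : ℚ))⁻¹ * X ^ (d / j) else 0) =
      ∑ᶠ k : {k : ℕ →₀ ℕ // k 0 = 0 ∧ (k.sum fun i v => i * v) = n},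
        C ((((k : ℕ →₀ ℕ).prod fun _ v => v.factorial : ℕ) : ℚ))⁻¹ *
          X ^ ((k : ℕ →₀ ℕ).sum fun _ v => v)) := by
  set p : (ℕ →₀ ℕ) → Prop := fun k => k 0 = 0 ∧ (k.sum fun i v => i * v) = n with hp
  set M : ℕ →₀ ℕ := Finsupp.indicator (Finset.Icc 1 n) (fun _ _ => n) with hM
  set T : Finset (ℕ →₀ ℕ) := (Finset.Icc 0 M).filter p with hT
  have hmem : ∀ k, p k ↔ k ∈ T := by
    intro k
    constructor
    · rintro hk
      obtain ⟨h0, h2⟩ := id hk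
      refine Finset.mem_filter.2 ⟨Finset.mem_Icc.2 ⟨zero_le, ?_⟩, hk⟩
      rw [Finsupp.le_iff]
      intro i hi
      have his : i ∈ Finset.Icc 1 n := supp_sub' k h0 h2 hi
      rw [hM, Finsupp.indicator_of_mem his]
      have h1 : 1 ≤ i := (Finset.mem_Icc.1 his).1
      calc k i ≤ i * k i := Nat.le_mul_of_pos_left _ h1
        _ ≤ k.sum fun i v => i * v :=
          Finset.single_le_sum (f := fun j => j * k j) (fun j _ => Nat.zero_le _) hi
        _ = n := h2
    · exact fun h => (Finset.mem_filter.1 h).2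
  rw [finsum_subtype_eq_sum' (α := ℕ →₀ ℕ)
    (fun k => C (((k.prod fun _ v => v.factorial : ℕ) : ℚ))⁻¹ *
      X ^ (k.sum fun _ v => v)) p T hmem]
  rw [PowerSeries.coeff_prod]
  simp only [PowerSeries.coeff_mk]
  set dv : (ℕ →₀ ℕ) → (ℕ →₀ ℕ) := fun l => Finsupp.onFinset l.support (fun j => l j / j)
    (fun a ha => Finsupp.mem_support_iff.2 (fun h => ha (by show l a / a = 0; rw [h, Nat.zero_div]))) with hdv
  set ml : (ℕ →₀ ℕ) → (ℕ →₀ ℕ) := fun k => Finsupp.onFinset k.support (fun j => j * k j)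
    (fun a ha => Finsupp.mem_support_iff.2 (fun h => ha (by show a * k a = 0; rw [h, mul_zero]))) with hml
  rw [← Finset.sum_filter_of_ne (p := fun l : ℕ →₀ ℕ => ∀ j ∈ Finset.Icc 1 N, j ∣ l j)
    (fun l _ hne j hj => by
      by_contra hndvd
      exact hne (Finset.prod_eq_zero hj (if_neg hndvd)))]
  refine Finset.sum_nbij' dv ml ?_ ?_ ?_ ?_ ?_
  · -- dv maps into T
    intro l hl
    obtain ⟨hl1, hdvd⟩ := Finset.mem_filter.1 hl
    obtain ⟨hsum, hlsupp⟩ := Finset.mem_finsuppAntidiag.1 hl1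
    have hsub : (dv l).support ⊆ Finset.Icc 1 N :=
      le_trans Finsupp.support_onFinset_subset hlsupp
    refine (hmem (dv l)).1 ⟨by simp [hdv, Finsupp.onFinset_apply], ?_⟩
    rw [Finsupp.sum_of_support_subset _ hsub (fun i v => i * v) (fun i _ => mul_zero i)]
    rw [← hsum]
    refine Finset.sum_congr rfl (fun j hj => ?_)
    exact Nat.mul_div_cancel' (hdvd j hj)
  · -- ml maps into the filtered antidiagonal
    intro k hk
    obtain ⟨h0, h2⟩ := (hmem k).2 hk
    have hsupp : k.support ⊆ Finset.Icc 1 N :=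
      le_trans (supp_sub' k h0 h2) (Finset.Icc_subset_Icc_right hN)
    have hsub : (ml k).support ⊆ Finset.Icc 1 N :=
      le_trans Finsupp.support_onFinset_subset hsupp
    refine Finset.mem_filter.2 ⟨Finset.mem_finsuppAntidiag.2 ⟨?_, hsub⟩, ?_⟩
    · rw [← h2, Finsupp.sum_of_support_subset _ hsupp (fun i v => i * v)
        (fun i _ => mul_zero i)]
      rfl
    · intro j _
      exact dvd_mul_right j (k j)
  · -- left inverse
    intro l hl
    obtain ⟨hl1, hdvd⟩ := Finset.mem_filter.1 hl
    obtain ⟨hsum, hlsupp⟩ := Finset.mem_finsuppAntidiag.1 hl1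
    ext a
    show a * (l a / a) = l a
    by_cases ha : a ∈ Finset.Icc 1 N
    · exact Nat.mul_div_cancel' (hdvd a ha)
    · have : l a = 0 := by
        by_contra h
        exact ha (hlsupp (Finsupp.mem_support_iff.2 h))
      simp [this]
  · -- right inverse
    intro k hk
    obtain ⟨h0, _⟩ := (hmem k).2 hk
    ext a
    show a * k a / a = k a
    rcases Nat.eq_zero_or_pos a with rfl | ha
    · simp [h0]
    · exact Nat.mul_div_cancel_left _ ha
  · -- terms agree
    intro l hl
    obtain ⟨hl1, hdvd⟩ := Finset.mem_filter.1 hl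
    obtain ⟨hsum, hlsupp⟩ := Finset.mem_finsuppAntidiag.1 hl1
    have hsub : (dv l).support ⊆ Finset.Icc 1 N :=
      le_trans Finsupp.support_onFinset_subset hlsupp
    have h1 : ((dv l).prod fun _ v => v.factorial) =
        ∏ j ∈ Finset.Icc 1 N, (l j / j).factorial :=
      Finsupp.prod_of_support_subset _ hsub (fun _ v => v.factorial) (fun i _ => rfl)
    have h2 : ((dv l).sum fun _ v => v) = ∑ j ∈ Finset.Icc 1 N, l j / j :=
      Finsupp.sum_of_support_subset _ hsub (fun _ v => v) (fun i _ => rfl)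
    calc ∏ j ∈ Finset.Icc 1 N,
          (if j ∣ l j then C (((l j / j).factorial : ℚ))⁻¹ * X ^ (l j / j) else 0)
        = ∏ j ∈ Finset.Icc 1 N, (C (((l j / j).factorial : ℚ))⁻¹ * X ^ (l j / j)) :=
          Finset.prod_congr rfl (fun j hj => if_pos (hdvd j hj))
      _ = (∏ j ∈ Finset.Icc 1 N, C (((l j / j).factorial : ℚ))⁻¹) *
          (∏ j ∈ Finset.Icc 1 N, X ^ (l j / j)) := Finset.prod_mul_distrib
      _ = C ((∏ j ∈ Finset.Icc 1 N, ((l j / j).factorial : ℚ)))⁻¹ *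
          X ^ (∑ j ∈ Finset.Icc 1 N, l j / j) := by
          rw [← Finset.prod_inv_distrib, ← map_prod, Finset.prod_pow_eq_pow_sum]
      _ = C ((((dv l).prod fun _ v => v.factorial : ℕ) : ℚ))⁻¹ *
          X ^ ((dv l).sum fun _ v => v) := by
          rw [h1, h2, Nat.cast_prod]


end FineP1

open Polynomial in
/-- Fine's proof of his identity: the coefficient of `qⁿ` in `∏_{j≥1} exp(t q^j)`
(a polynomial in `t`; the product is stabilized by any partial product over
`1 ≤ j ≤ N` with `N ≥ n`) is `∑_{partitions of n} t^r / ∏_j (k j)!` where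
`r = ∑_j k j`; equating with the expansion of `exp(tq/(1-q))` yields Fine's Identity. -/
theorem fine_proof (n N : ℕ) (hN : n ≤ N) (r : ℕ) (hn : 1 ≤ n) (hr : 1 ≤ r) :
    (PowerSeries.coeff (R := Polynomial ℚ) n (∏ j ∈ Finset.Icc 1 N,
        PowerSeries.mk fun d =>
          if j ∣ d then C (((d / j).factorial : ℚ))⁻¹ * X ^ (d / j) else 0) =
      ∑ᶠ k : {k : ℕ →₀ ℕ // k 0 = 0 ∧ (k.sum fun i v => i * v) = n},
        C ((((k : ℕ →₀ ℕ).prod fun _ v => v.factorial : ℕ) : ℚ))⁻¹ *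
          X ^ ((k : ℕ →₀ ℕ).sum fun _ v => v)) ∧
    ∑ᶠ k : {k : ℕ →₀ ℕ //
        k 0 = 0 ∧ (k.sum fun _ v => v) = r ∧ (k.sum fun i v => i * v) = n},
      Nat.multinomial (k : ℕ →₀ ℕ).support (k : ℕ →₀ ℕ) = (n - 1).choose (r - 1) := by
  exact ⟨fine_part1 n N hN hn, fine_part2 n r hn hr⟩
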